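/- Let n ≥ 2. For all λ, μ ∈ Δ° and all c, d ∈ ℝ the following vector-space axioms hold: (i) c ⊙ λ ∈ Δ°; (ii) c ⊙ (λ ⊕ μ) = (c ⊙ λ) ⊕ (c ⊙ μ); (iii) (c + d) ⊙ λ = (c ⊙ λ) ⊕ (d ⊙ λ); (iv) (c * d) ⊙ λ = c ⊙ (d ⊙ λ); (v) 1 ⊙ λ = λ. Hence (Δ°, ⊕, ⊙) is a real vector space. -/
import Mathlib


open Real Finset

/-- The open probability simplex. -/
def simplex' (n : ℕ) : Set (Fin n → ℝ) :=
  {l | (∀ i, 0 < l i) ∧ ∑ i, l i = 1}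

/-- The perturbation operation on the open simplex. -/
noncomputable def pert (n : ℕ) (l m : Fin n → ℝ) : Fin n → ℝ :=
  fun i => l i * m i / ∑ j, l j * m j

/-- The powering operation on the open simplex (real powers via `Real.rpow`). -/
noncomputable def spow (n : ℕ) (c : ℝ) (l : Fin n → ℝ) : Fin n → ℝ :=
  fun i => l i ^ c / ∑ j, l j ^ c

/-- the vector-space axioms for `(Δ°, ⊕, ⊙)`. -/
theorem stmt4 (n : ℕ) (hn : 2 ≤ n) (l m : Fin n → ℝ)
    (hl : l ∈ simplex' n) (hm : m ∈ simplex' n) (c d : ℝ) :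
    spow n c l ∈ simplex' n ∧
    spow n c (pert n l m) = pert n (spow n c l) (spow n c m) ∧
    spow n (c + d) l = pert n (spow n c l) (spow n d l) ∧
    spow n (c * d) l = spow n c (spow n d l) ∧
    spow n 1 l = l := by
  have hne : (Finset.univ : Finset (Fin n)).Nonempty := by
    rw [Finset.univ_nonempty_iff]
    exact Fin.pos_iff_nonempty.mp (by omega)
  obtain ⟨hlp, hls⟩ := hl
  obtain ⟨hmp, hms⟩ := hm
  have spos : ∀ f : Fin n → ℝ, (∀ i, 0 < f i) → 0 < ∑ j, f j :=
    fun f hf => Finset.sum_pos (fun i _ => hf i) hne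
  have key : ∀ (f g : Fin n → ℝ) (t : ℝ), 0 < t →
      (∀ i, f i = t * g i) →
      (fun i => f i / ∑ j, f j) = (fun i => g i / ∑ j, g j) := by
    intro f g t ht hfg
    funext i
    have hsum : ∑ j, f j = t * ∑ j, g j := by
      rw [Finset.mul_sum]; exact Finset.sum_congr rfl fun j _ => hfg j
    rw [hfg i, hsum, mul_div_mul_left _ _ ht.ne']
  have hTc : 0 < ∑ j, l j * m j := spos _ fun j => mul_pos (hlp j) (hmp j)
  have hSc : ∀ e : ℝ, 0 < ∑ j, l j ^ e :=
    fun e => spos _ fun j => rpow_pos_of_pos (hlp j) e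
  have hMc : ∀ e : ℝ, 0 < ∑ j, m j ^ e :=
    fun e => spos _ fun j => rpow_pos_of_pos (hmp j) e
  refine ⟨⟨fun i => div_pos (rpow_pos_of_pos (hlp i) c) (hSc c), ?_⟩, ?_, ?_, ?_, ?_⟩
  · unfold spow
    rw [← Finset.sum_div, div_self (hSc c).ne']
  · -- spow c (pert l m) = pert (spow c l) (spow c m)
    have h1 : spow n c (pert n l m)
        = fun i => (l i * m i) ^ c / ∑ j, (l j * m j) ^ c := by
      unfold spow pert
      refine key _ _ (((∑ j, l j * m j) ^ c)⁻¹)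
        (inv_pos.mpr (rpow_pos_of_pos hTc c)) fun i => ?_
      rw [div_rpow (mul_pos (hlp i) (hmp i)).le hTc.le, div_eq_inv_mul]
    have h2 : pert n (spow n c l) (spow n c m)
        = fun i => (l i * m i) ^ c / ∑ j, (l j * m j) ^ c := by
      unfold spow pert
      refine key _ _ (((∑ j, l j ^ c) * ∑ j, m j ^ c)⁻¹)
        (inv_pos.mpr (mul_pos (hSc c) (hMc c))) fun i => ?_
      rw [mul_rpow (hlp i).le (hmp i).le]
      field_simp
    rw [h1, h2]
  · -- spow (c+d) l = pert (spow c l) (spow d l)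
    have h1 : spow n (c + d) l = fun i => l i ^ c * l i ^ d / ∑ j, l j ^ c * l j ^ d := by
      unfold spow
      exact key _ _ 1 one_pos fun i => by rw [rpow_add (hlp i), one_mul]
    have h2 : pert n (spow n c l) (spow n d l)
        = fun i => l i ^ c * l i ^ d / ∑ j, l j ^ c * l j ^ d := by
      unfold spow pert
      refine key _ _ (((∑ j, l j ^ c) * ∑ j, l j ^ d)⁻¹)
        (inv_pos.mpr (mul_pos (hSc c) (hSc d))) fun i => ?_
      field_simp
    rw [h1, h2]
  · -- spow (c*d) l = spow c (spow d l)
    have h1 : spow n (c * d) l = fun i => (l i ^ d) ^ c / ∑ j, (l j ^ d) ^ c := by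
      unfold spow
      refine key _ _ 1 one_pos fun i => ?_
      rw [one_mul, mul_comm c d, rpow_mul (hlp i).le]
    have h2 : spow n c (spow n d l) = fun i => (l i ^ d) ^ c / ∑ j, (l j ^ d) ^ c := by
      unfold spow
      refine key _ _ (((∑ j, l j ^ d) ^ c)⁻¹)
        (inv_pos.mpr (rpow_pos_of_pos (hSc d) c)) fun i => ?_
      rw [div_rpow (rpow_pos_of_pos (hlp i) d).le (hSc d).le, div_eq_inv_mul]
    rw [h1, h2]
  · funext i
    simp [spow, rpow_one, hls]
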